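/- c_{0,I} and c_{0,J} are c_0-disjoint (i.e., |x| ∧ |y| ∈ c_0 for all x ∈ c_{0,I} and y ∈ c_{0,J}) if and only if I ⊆ J^⊥. -/

import Mathlib

open BoundedContinuousFunction Filter Topology

open scoped Classical in
/-- Indicator of a set as a bounded continuous function on `ℕ`. -/
noncomputable def indBCF (S : Set ℕ) : ℕ →ᵇ ℝ :=
  BoundedContinuousFunction.mkOfBound
    ⟨fun n => if n ∈ S then 1 else 0, continuous_of_discreteTopology⟩ 2
    (by
      intro a b
      dsimp
      split_ifs <;> simp [Real.dist_eq] <;> norm_num)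

open scoped Classical in
lemma indBCF_apply (S : Set ℕ) (n : ℕ) : indBCF S n = if n ∈ S then 1 else 0 := rfl

lemma indBCF_mem (S : Set ℕ) {ε : ℝ} (hε : 0 < ε) : {n | ε ≤ |indBCF S n|} ⊆ S := by
  intro n hn
  by_contra hnS
  rw [Set.mem_setOf_eq, indBCF_apply, if_neg hnS, abs_zero] at hn
  linarith

/-- `c_{0,I}` and `c_{0,J}` are `c_0`-disjoint (`|x| ∧ |y| ∈ c_0` for all `x ∈ c_{0,I}`,
`y ∈ c_{0,J}`) if and only if `I ⊆ J^⊥`. -/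
theorem c0_disjoint_iff_orthogonal (I J : Set (Set ℕ))
    (hIdown : ∀ {A B : Set ℕ}, A ⊆ B → B ∈ I → A ∈ I)
    (hIunion : ∀ {A B : Set ℕ}, A ∈ I → B ∈ I → A ∪ B ∈ I)
    (hIfin : ∀ A : Set ℕ, A.Finite → A ∈ I)
    (hJdown : ∀ {A B : Set ℕ}, A ⊆ B → B ∈ J → A ∈ J)
    (hJunion : ∀ {A B : Set ℕ}, A ∈ J → B ∈ J → A ∪ B ∈ J)
    (hJfin : ∀ A : Set ℕ, A.Finite → A ∈ J) :
    (∀ x : ℕ →ᵇ ℝ, (∀ ε > (0 : ℝ), {n | ε ≤ |x n|} ∈ I) →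
      ∀ y : ℕ →ᵇ ℝ, (∀ ε > (0 : ℝ), {n | ε ≤ |y n|} ∈ J) →
        Tendsto (fun n => min |x n| |y n|) atTop (𝓝 0)) ↔
    I ⊆ {B : Set ℕ | ∀ A ∈ J, (A ∩ B).Finite} := by
  constructor
  · intro h B hB A hA
    have hx : ∀ ε > (0 : ℝ), {n | ε ≤ |indBCF B n|} ∈ I := fun ε hε =>
      hIdown (indBCF_mem B hε) hB
    have hy : ∀ ε > (0 : ℝ), {n | ε ≤ |indBCF A n|} ∈ J := fun ε hε =>
      hJdown (indBCF_mem A hε) hA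
    have ht := h (indBCF B) hx (indBCF A) hy
    have hev : ∀ᶠ n in atTop, min |indBCF B n| |indBCF A n| < 1/2 := by
      have := Metric.tendsto_nhds.mp ht (1/2) (by norm_num)
      filter_upwards [this] with n hn
      rw [Real.dist_eq, sub_zero] at hn
      exact lt_of_le_of_lt (le_abs_self _) hn
    rcases eventually_atTop.mp hev with ⟨N, hN⟩
    apply Set.Finite.subset (Set.finite_Iio N)
    rintro n ⟨hnA, hnB⟩
    by_contra hn
    have hn' : N ≤ n := le_of_not_gt hn
    have := hN n hn'
    rw [indBCF_apply, indBCF_apply, if_pos hnA, if_pos hnB] at this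
    norm_num at this
  · intro h x hx y hy
    rw [Metric.tendsto_nhds]
    intro ε hε
    have hfin : ({n | ε ≤ |y n|} ∩ {n | ε ≤ |x n|}).Finite :=
      h (hx ε hε) _ (hy ε hε)
    have : ∀ᶠ n in atTop, n ∉ ({n | ε ≤ |y n|} ∩ {n | ε ≤ |x n|}) := by
      rw [← Nat.cofinite_eq_atTop]
      exact hfin.eventually_cofinite_notMem
    filter_upwards [this] with n hn
    rw [Real.dist_eq, sub_zero, abs_of_nonneg (le_min (abs_nonneg _) (abs_nonneg _))]
    by_contra hc
    push_neg at hc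
    exact hn ⟨le_trans hc (min_le_right _ _), le_trans hc (min_le_left _ _)⟩
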